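/- Let Φ be an m × M matrix with unit-norm columns and coherence μ, and let u ∈ ℝ^M be k-sparse with k < (1/2)(1 + 1/μ). Then u is the unique sparsest solution of Φv = Φu: any v ≠ u with Φv = Φu satisfies ‖v‖₀ > ‖u‖₀. -/

import Mathlib

open scoped Classical

/-- Uniqueness of sparse solutions: if u is k-sparse with
k < (1/2)(1 + 1/μ), then u is the unique sparsest solution of Φv = Φu. -/
theorem sparse_uniqueness
    (m M : ℕ) (Φ : Matrix (Fin m) (Fin M) ℝ) (μ : ℝ) (hμ0 : 0 < μ)
    (hunit : ∀ j, ∑ i, Φ i j ^ 2 = 1)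
    (hμ : ∀ c d, c ≠ d → |∑ i, Φ i c * Φ i d| ≤ μ)
    (u : Fin M → ℝ) (k : ℕ)
    (hu : (Finset.univ.filter fun j => u j ≠ 0).card ≤ k)
    (hk : (k : ℝ) < (1 / 2) * (1 + 1 / μ))
    (v : Fin M → ℝ) (hv : Φ.mulVec v = Φ.mulVec u) (hvu : v ≠ u) :
    (Finset.univ.filter fun j => u j ≠ 0).card <
      (Finset.univ.filter fun j => v j ≠ 0).card := by
  set w : Fin M → ℝ := v - u with hw
  have hΦw : Φ.mulVec w = 0 := by
    rw [hw, Matrix.mulVec_sub, hv, sub_self]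
  set S := Finset.univ.filter (fun j => w j ≠ 0) with hS
  have hSne : S.Nonempty := by
    have hw0 : w ≠ 0 := sub_ne_zero.mpr hvu
    obtain ⟨j, hj⟩ := Function.ne_iff.mp hw0
    exact ⟨j, by simp only [hS, Finset.mem_filter, Finset.mem_univ, true_and]; simpa using hj⟩
  obtain ⟨j₀, hj₀S, hj₀max⟩ := S.exists_max_image (fun j => |w j|) hSne
  have hwj₀ : w j₀ ≠ 0 := by simpa [hS] using hj₀S
  have habs : 0 < |w j₀| := abs_pos.mpr hwj₀
  -- swap the double sum
  have swap : ∑ c, (∑ i, Φ i j₀ * Φ i c) * w c = 0 := by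
    have : ∑ c, (∑ i, Φ i j₀ * Φ i c) * w c
        = ∑ i, Φ i j₀ * (Φ.mulVec w) i := by
      simp only [Matrix.mulVec, dotProduct, Finset.sum_mul, Finset.mul_sum]
      rw [Finset.sum_comm]
      exact Finset.sum_congr rfl fun i _ => Finset.sum_congr rfl fun c _ => by ring
    rw [this, hΦw]
    simp
  have split : w j₀ + ∑ c ∈ Finset.univ.erase j₀, (∑ i, Φ i j₀ * Φ i c) * w c = 0 := by
    have := Finset.add_sum_erase Finset.univ
      (fun c => (∑ i, Φ i j₀ * Φ i c) * w c) (Finset.mem_univ j₀)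
    beta_reduce at this
    have hdiag : (∑ i, Φ i j₀ * Φ i j₀) * w j₀ = w j₀ := by
      have : ∑ i, Φ i j₀ * Φ i j₀ = 1 := by
        rw [← hunit j₀]; exact Finset.sum_congr rfl fun i _ => (sq (Φ i j₀)).symm
      rw [this, one_mul]
    rw [← swap, ← this, hdiag]
  -- bound
  have hbound : |w j₀| ≤ ((S.card : ℝ) - 1) * μ * |w j₀| := by
    have heq : |w j₀| = |∑ c ∈ Finset.univ.erase j₀, (∑ i, Φ i j₀ * Φ i c) * w c| := by
      rw [eq_neg_of_add_eq_zero_left split, abs_neg]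
    calc |w j₀|
        = |∑ c ∈ Finset.univ.erase j₀, (∑ i, Φ i j₀ * Φ i c) * w c| := heq
      _ ≤ ∑ c ∈ Finset.univ.erase j₀, |(∑ i, Φ i j₀ * Φ i c) * w c| :=
          Finset.abs_sum_le_sum_abs _ _
      _ = ∑ c ∈ S.erase j₀, |(∑ i, Φ i j₀ * Φ i c) * w c| := by
          apply (Finset.sum_subset ?_ ?_).symm
          · intro c hc
            simp only [Finset.mem_erase] at hc ⊢
            exact ⟨hc.1, Finset.mem_univ c⟩
          · intro c _ hc
            have : w c = 0 := by
              by_contra h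
              apply hc
              simp only [Finset.mem_erase, hS, Finset.mem_filter, Finset.mem_univ,
                true_and] at *
              exact ⟨by rintro rfl; simp at *, h⟩
            simp [this]
      _ ≤ ∑ c ∈ S.erase j₀, μ * |w j₀| := by
          apply Finset.sum_le_sum
          intro c hc
          have hc' := Finset.mem_erase.mp hc
          rw [abs_mul]
          have h1 : |∑ i, Φ i j₀ * Φ i c| ≤ μ := hμ j₀ c (Ne.symm hc'.1)
          have h2 : |w c| ≤ |w j₀| := hj₀max c hc'.2
          exact mul_le_mul h1 h2 (abs_nonneg _) (le_trans (abs_nonneg _) h1)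
      _ = ((S.erase j₀).card : ℝ) * (μ * |w j₀|) := by
          rw [Finset.sum_const, nsmul_eq_mul]
      _ = ((S.card : ℝ) - 1) * μ * |w j₀| := by
          rw [Finset.card_erase_of_mem hj₀S]
          have h1 : 1 ≤ S.card := Finset.card_pos.mpr ⟨j₀, hj₀S⟩
          push_cast [h1]
          ring
  have hcard1 : 1 ≤ ((S.card : ℝ) - 1) * μ := by
    have := (mul_le_mul_iff_of_pos_right habs).mp (by linarith [hbound] : 1 * |w j₀| ≤ ((S.card : ℝ) - 1) * μ * |w j₀|)
    linarith [this]
  have hSbig : 1 + 1 / μ ≤ (S.card : ℝ) := by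
    have h : 1 / μ ≤ (S.card : ℝ) - 1 := by
      rw [div_le_iff₀ hμ0]; linarith
    linarith
  -- supp w ⊆ supp u ∪ supp v
  have hsub : S ⊆ (Finset.univ.filter fun j => u j ≠ 0) ∪
      (Finset.univ.filter fun j => v j ≠ 0) := by
    intro c hc
    simp only [hS, Finset.mem_filter, Finset.mem_univ, true_and] at hc
    simp only [Finset.mem_union, Finset.mem_filter, Finset.mem_univ, true_and]
    by_contra h
    push_neg at h
    apply hc
    simp [hw, h.1, h.2]
  have hcardsum : (S.card : ℝ) ≤
      ((Finset.univ.filter fun j => u j ≠ 0).card : ℝ) +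
      ((Finset.univ.filter fun j => v j ≠ 0).card : ℝ) := by
    have h1 := Finset.card_le_card hsub
    have h2 := Finset.card_union_le (Finset.univ.filter fun j => u j ≠ 0)
      (Finset.univ.filter fun j => v j ≠ 0)
    exact_mod_cast le_trans h1 h2
  have hku : ((Finset.univ.filter fun j => u j ≠ 0).card : ℝ) ≤ (k : ℝ) := by
    exact_mod_cast hu
  have : ((Finset.univ.filter fun j => u j ≠ 0).card : ℝ) <
      ((Finset.univ.filter fun j => v j ≠ 0).card : ℝ) := by linarith
  exact_mod_cast this
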